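/- For b, c ∈ N^{n-1}: H^0(X, O(D(b)))·H^0(X, O(D(c))) = H^0(X, O(D(b+c))), i.e. the multiplication map on global sections of these nef toric divisors is surjective. -/

import Mathlib

open Finset

/-- Coefficient `a_k` of `D_k` in `D(b) = ∑_{i=1}^{n-1} b_i D(i)`. -/
def acoef (n : ℕ) (b : ℕ → ℕ) (kk : ℕ) : ℤ :=
  ∑ j ∈ Icc (n + 1 - kk) (n - 1), ((j : ℤ) + (kk : ℤ) - (n : ℤ)) * (b j : ℤ)

/-- Lattice points of `H^0(X, O(D(b)))`: monomial exponents `u` with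
`⟨u, v_j⟩ ≥ −a_j` for all rays `v_j = (1, j)`, `0 ≤ j ≤ n`. -/
def Psec (n : ℕ) (b : ℕ → ℕ) : Set (ℤ × ℤ) :=
  {u | ∀ j : ℕ, j ≤ n → 0 ≤ u.1 + (j : ℤ) * u.2 + acoef n b j}

/-- `H^0(X, O(D(b)))` realized as the span of its monomials inside the Laurent
polynomial algebra `ℂ[x^{±1}, z^{±1}]`. -/
noncomputable def H0span (n : ℕ) (b : ℕ → ℕ) :
    Submodule ℂ (AddMonoidAlgebra ℂ (ℤ × ℤ)) :=
  Submodule.span ℂ {x | ∃ u ∈ Psec n b, x = AddMonoidAlgebra.single u (1 : ℂ)}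

/-- increment of acoef -/
def sig (n : ℕ) (b : ℕ → ℕ) (k : ℕ) : ℤ := ∑ j ∈ Icc (n - k) (n - 1), (b j : ℤ)

lemma sig_nonneg (n : ℕ) (b : ℕ → ℕ) (k : ℕ) : 0 ≤ sig n b k :=
  Finset.sum_nonneg fun j _ => by positivity

lemma sig_mono (n : ℕ) (b : ℕ → ℕ) {k k' : ℕ} (h : k ≤ k') : sig n b k ≤ sig n b k' :=
  Finset.sum_le_sum_of_subset_of_nonneg (Icc_subset_Icc (by omega) le_rfl)
    (fun j _ _ => by positivity)

lemma sig_zero (n : ℕ) (hn : 1 ≤ n) (b : ℕ → ℕ) : sig n b 0 = 0 := by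
  rw [sig, Icc_eq_empty (by omega), Finset.sum_empty]

lemma acoef_zero (n : ℕ) (b : ℕ → ℕ) : acoef n b 0 = 0 := by
  rw [acoef, Icc_eq_empty (by omega), Finset.sum_empty]

lemma acoef_eq (n : ℕ) (b : ℕ → ℕ) {k : ℕ} (hk : k ≤ n) :
    acoef n b k = ∑ j ∈ Icc 1 (n - 1), max ((j : ℤ) + k - n) 0 * (b j : ℤ) := by
  have hsub : Icc (n + 1 - k) (n - 1) ⊆ Icc 1 (n - 1) :=
    Icc_subset_Icc (by omega) le_rfl
  rw [acoef]
  have h1 : (∑ j ∈ Icc (n + 1 - k) (n - 1), ((j : ℤ) + k - n) * (b j : ℤ))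
      = ∑ j ∈ Icc (n + 1 - k) (n - 1), max ((j : ℤ) + k - n) 0 * (b j : ℤ) := by
    apply Finset.sum_congr rfl
    intro j hj
    rw [Finset.mem_Icc] at hj
    rw [max_eq_left (by omega : (0:ℤ) ≤ (j : ℤ) + k - n)]
  rw [h1]
  apply Finset.sum_subset hsub
  intro j hj hj'
  rw [Finset.mem_Icc] at hj hj'
  rw [max_eq_right (by omega : ((j : ℤ) + k - n) ≤ 0), zero_mul]

lemma sig_eq (n : ℕ) (b : ℕ → ℕ) {k : ℕ} (hk : k < n) :
    sig n b k = ∑ j ∈ Icc 1 (n - 1), (if n - k ≤ j then (b j : ℤ) else 0) := by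
  have hsub : Icc (n - k) (n - 1) ⊆ Icc 1 (n - 1) :=
    Icc_subset_Icc (by omega) le_rfl
  have h1 : sig n b k = ∑ j ∈ Icc (n - k) (n - 1), (if n - k ≤ j then (b j : ℤ) else 0) := by
    apply Finset.sum_congr rfl
    intro j hj
    rw [Finset.mem_Icc] at hj
    rw [if_pos hj.1]
  rw [h1]
  apply Finset.sum_subset hsub
  intro j hj hj'
  rw [Finset.mem_Icc] at hj hj'
  rw [if_neg (by omega)]

lemma acoef_succ (n : ℕ) (b : ℕ → ℕ) {k : ℕ} (hk : k < n) :
    acoef n b (k + 1) = acoef n b k + sig n b k := by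
  rw [acoef_eq n b (by omega : k + 1 ≤ n), acoef_eq n b hk.le, sig_eq n b hk,
    ← Finset.sum_add_distrib]
  apply Finset.sum_congr rfl
  intro j hj
  rw [Finset.mem_Icc] at hj
  rcases le_or_gt (n - k) j with h | h
  · rw [if_pos h, max_eq_left (by omega), max_eq_left (by omega)]
    push_cast; ring
  · rw [if_neg (by omega), max_eq_right (by omega), max_eq_right (by omega)]
    ring

lemma acoef_sum (n : ℕ) (b : ℕ → ℕ) : ∀ {k : ℕ}, k ≤ n →
    acoef n b k = ∑ j ∈ range k, sig n b j := by
  intro k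
  induction k with
  | zero => intro _; simp [acoef_zero]
  | succ k ih =>
    intro hk
    rw [Finset.sum_range_succ, acoef_succ n b (by omega), ih (by omega)]

lemma acoef_diff_bound (n : ℕ) (b : ℕ → ℕ) (j0 : ℕ) (m : ℤ) (hj0 : j0 ≤ n)
    (hup : j0 < n → m ≤ sig n b j0) (hdn : 0 < j0 → sig n b (j0 - 1) ≤ m) :
    ∀ j ≤ n, ((j : ℤ) - (j0 : ℤ)) * m ≤ acoef n b j - acoef n b j0 := by
  intro j hj
  rcases le_or_gt j0 j with h | h
  · rcases eq_or_lt_of_le h with rfl | h'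
    · simp
    have hj0n : j0 < n := lt_of_lt_of_le h' hj
    rw [acoef_sum n b hj, acoef_sum n b hj0, ← Finset.sum_Ico_eq_sub _ h]
    have : ∀ k ∈ Ico j0 j, m ≤ sig n b k := fun k hk => by
      rw [Finset.mem_Ico] at hk
      exact le_trans (hup hj0n) (sig_mono n b hk.1)
    calc ((j : ℤ) - j0) * m = (Ico j0 j).card • m := by
          rw [Nat.card_Ico, nsmul_eq_mul]
          have : ((j - j0 : ℕ) : ℤ) = (j : ℤ) - j0 := by push_cast [h]; ring
          rw [this]
      _ ≤ ∑ k ∈ Ico j0 j, sig n b k := Finset.card_nsmul_le_sum _ _ _ this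
  · have hpos : 0 < j0 := lt_of_le_of_lt (Nat.zero_le j) h
    rw [acoef_sum n b hj, acoef_sum n b hj0]
    have heq : acoef n b j0 - acoef n b j0 = 0 := sub_self _
    have hIco : (∑ k ∈ range j0, sig n b k) - ∑ k ∈ range j, sig n b k
        = ∑ k ∈ Ico j j0, sig n b k := by
      rw [Finset.sum_Ico_eq_sub _ h.le]
    have : ∀ k ∈ Ico j j0, sig n b k ≤ m := fun k hk => by
      rw [Finset.mem_Ico] at hk
      exact le_trans (sig_mono n b (by omega : k ≤ j0 - 1)) (hdn hpos)
    have hsum : ∑ k ∈ Ico j j0, sig n b k ≤ (Ico j j0).card • m :=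
      Finset.sum_le_card_nsmul _ _ _ this
    rw [Nat.card_Ico] at hsum
    have : ((j0 - j : ℕ) : ℤ) = (j0 : ℤ) - j := by push_cast [h.le]; ring
    rw [nsmul_eq_mul, this] at hsum
    linarith [hIco]

lemma acoef_add (n : ℕ) (b c : ℕ → ℕ) (k : ℕ) :
    acoef n (fun j => b j + c j) k = acoef n b k + acoef n c k := by
  rw [acoef, acoef, acoef, ← Finset.sum_add_distrib]
  apply Finset.sum_congr rfl
  intro j _
  push_cast
  ring

lemma key_decomp (n : ℕ) (hn : 1 ≤ n) (b c : ℕ → ℕ) (u : ℤ × ℤ)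
    (hu : u ∈ Psec n (fun j => b j + c j)) :
    ∃ v w : ℤ × ℤ, v ∈ Psec n b ∧ w ∈ Psec n c ∧ v + w = u := by
  classical
  set t : ℤ := u.2 with ht
  set P : ℕ → Prop := fun j => j = n ∨ -t ≤ sig n b j + sig n c j with hP
  have hPn : P n := Or.inl rfl
  have hex : ∃ j, P j := ⟨n, hPn⟩
  set j0 : ℕ := Nat.find hex with hj0def
  have hj0n : j0 ≤ n := Nat.find_min' hex hPn
  have hspec : P j0 := Nat.find_spec hex
  have hmin : ∀ j < j0, ¬ P j := fun j hj => Nat.find_min hex hj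
  -- the split value
  set m1 : ℤ :=
    if j0 = 0 then -t
    else if j0 = n then sig n b (j0 - 1)
    else max (sig n b (j0 - 1)) (-t - sig n c j0) with hm1
  -- facts from minimality
  have hlow : 0 < j0 → sig n b (j0 - 1) + sig n c (j0 - 1) < -t := by
    intro hpos
    have := hmin (j0 - 1) (by omega)
    simp only [hP, not_or, not_le] at this
    linarith [this.2]
  have hhigh : j0 < n → -t ≤ sig n b j0 + sig n c j0 := by
    intro hlt
    rcases hspec with h | h
    · omega
    · exact h
  -- the four bounds
  have Hbu : j0 < n → m1 ≤ sig n b j0 := by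
    intro hlt
    rw [hm1]
    rcases Nat.eq_zero_or_pos j0 with h0 | hpos
    · rw [if_pos h0, h0]
      have := hhigh hlt
      rw [h0, sig_zero n hn b, sig_zero n hn c] at this
      rw [sig_zero n hn b]
      linarith
    · rw [if_neg (by omega), if_neg (by omega)]
      apply max_le
      · exact sig_mono n b (by omega)
      · have := hhigh hlt
        linarith
  have Hbd : 0 < j0 → sig n b (j0 - 1) ≤ m1 := by
    intro hpos
    rw [hm1, if_neg (by omega)]
    rcases eq_or_lt_of_le hj0n with h | h
    · rw [if_pos h]
    · rw [if_neg (by omega)]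
      exact le_max_left _ _
  have Hcu : j0 < n → -t - m1 ≤ sig n c j0 := by
    intro hlt
    rw [hm1]
    rcases Nat.eq_zero_or_pos j0 with h0 | hpos
    · rw [if_pos h0, h0, sig_zero n hn c]
      linarith
    · rw [if_neg (by omega), if_neg (by omega)]
      have := le_max_right (sig n b (j0 - 1)) (-t - sig n c j0)
      linarith
  have Hcd : 0 < j0 → sig n c (j0 - 1) ≤ -t - m1 := by
    intro hpos
    have hl := hlow hpos
    rw [hm1, if_neg (by omega)]
    rcases eq_or_lt_of_le hj0n with h | h
    · rw [if_pos h]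
      linarith
    · rw [if_neg (by omega)]
      have h1 : sig n b (j0 - 1) ≤ -t - sig n c (j0 - 1) := by linarith
      have h2 : -t - sig n c j0 ≤ -t - sig n c (j0 - 1) := by
        have := sig_mono n c (by omega : j0 - 1 ≤ j0)
        linarith
      have := max_le h1 h2
      linarith
  have Vb := acoef_diff_bound n b j0 m1 hj0n Hbu Hbd
  have Vc := acoef_diff_bound n c j0 (-t - m1) hj0n Hcu Hcd
  -- assemble
  set A : ℤ := -acoef n b j0 + (j0 : ℤ) * m1 with hA
  refine ⟨(A, -m1), (u.1 - A, t + m1), ?_, ?_, ?_⟩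
  · intro j hj
    have := Vb j hj
    simp only
    nlinarith [this]
  · intro j hj
    have hVc := Vc j hj
    have hu0 := hu j0 hj0n
    rw [acoef_add] at hu0
    simp only at hu0 ⊢
    nlinarith [hVc, hu0]
  · ext <;> simp [ht]

lemma Psec_add_mem (n : ℕ) (b c : ℕ → ℕ) {v w : ℤ × ℤ}
    (hv : v ∈ Psec n b) (hw : w ∈ Psec n c) :
    v + w ∈ Psec n (fun j => b j + c j) := by
  intro j hj
  have h1 := hv j hj
  have h2 := hw j hj
  rw [acoef_add]
  simp only [Prod.fst_add, Prod.snd_add]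
  linarith


/-- For `b, c ∈ ℕ^{n-1}`:
`H^0(X, O(D(b))) · H^0(X, O(D(c))) = H^0(X, O(D(b+c)))`, i.e. multiplication of global
sections of these nef toric divisors is surjective. -/
theorem statement12 (n : ℕ) (hn : 1 ≤ n) (b c : ℕ → ℕ) :
    H0span n b * H0span n c = H0span n (fun j => b j + c j) := by
  rw [H0span, H0span, H0span, Submodule.span_mul_span]
  congr 1
  ext x
  simp only [Set.mem_mul, Set.mem_setOf_eq]
  constructor
  · rintro ⟨s, ⟨v, hv, rfl⟩, t, ⟨w, hw, rfl⟩, rfl⟩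
    refine ⟨v + w, Psec_add_mem n b c hv hw, ?_⟩
    rw [AddMonoidAlgebra.single_mul_single, one_mul]
  · rintro ⟨u, hu, rfl⟩
    obtain ⟨v, w, hv, hw, rfl⟩ := key_decomp n hn b c u hu
    exact ⟨_, ⟨v, hv, rfl⟩, _, ⟨w, hw, rfl⟩, by
      rw [AddMonoidAlgebra.single_mul_single, one_mul]⟩
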